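/- For every y > 0, the function F(y) = Σ_{n≥2} (n²−1) ( (1/6) n⁴y⁴ − 2n²y² + 2 ) e^{−n²y²/4} is differentiable on (0,∞) and F′(y) = − (1/12) Σ_{n≥1} ( n⁸y⁵ − n⁶y³(20 + y²) + 20 n⁴ y (3 + y²) − 60 n² y ) e^{−n²y²/4}. -/

import Mathlib

open Real

set_option maxHeartbeats 1000000

/-- summand of the tail series. -/
noncomputable def diamG (n : ℕ) (u : ℝ) : ℝ :=
  (((n : ℝ) + 2) ^ 2 - 1) *
    ((1 / 6) * ((n : ℝ) + 2) ^ 4 * u ^ 4 - 2 * ((n : ℝ) + 2) ^ 2 * u ^ 2 + 2) *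
    Real.exp (-(((n : ℝ) + 2) ^ 2 * u ^ 2 / 4))

/-- termwise derivative. -/
noncomputable def diamG' (n : ℕ) (u : ℝ) : ℝ :=
  -(1 / 12) *
    (((n : ℝ) + 2) ^ 8 * u ^ 5 - ((n : ℝ) + 2) ^ 6 * u ^ 3 * (20 + u ^ 2)
      + 20 * ((n : ℝ) + 2) ^ 4 * u * (3 + u ^ 2) - 60 * ((n : ℝ) + 2) ^ 2 * u) *
    Real.exp (-(((n : ℝ) + 2) ^ 2 * u ^ 2 / 4))

lemma diamG_hasDerivAt (n : ℕ) (u : ℝ) : HasDerivAt (diamG n) (diamG' n u) u := by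
  have harg : HasDerivAt (fun x : ℝ => -(((n : ℝ) + 2) ^ 2 * x ^ 2 / 4))
      (-(((n : ℝ) + 2) ^ 2 * (2 * u) / 4)) u := by
    have h := (((hasDerivAt_pow 2 u).const_mul (((n : ℝ) + 2) ^ 2)).div_const 4).neg
    simpa [Pi.neg_def] using h
  have he : HasDerivAt (fun x : ℝ => Real.exp (-(((n : ℝ) + 2) ^ 2 * x ^ 2 / 4)))
      (Real.exp (-(((n : ℝ) + 2) ^ 2 * u ^ 2 / 4)) * (-(((n : ℝ) + 2) ^ 2 * (2 * u) / 4))) u :=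
    harg.exp
  have h4 := (hasDerivAt_pow 4 u).const_mul ((1 / 6) * ((n : ℝ) + 2) ^ 4)
  have h2 := (hasDerivAt_pow 2 u).const_mul (2 * ((n : ℝ) + 2) ^ 2)
  have hp := ((h4.sub h2).add_const 2).const_mul (((n : ℝ) + 2) ^ 2 - 1)
  have H := hp.mul he
  refine (H : HasDerivAt (diamG n) _ u).congr_deriv ?_
  simp only [diamG', Pi.sub_apply]
  push_cast
  ring

lemma diamAuxSummable (c : ℝ) (hc : 0 < c) :
    Summable (fun n : ℕ => ((n : ℝ) + 2) ^ 8 * Real.exp (-(((n : ℝ) + 2)) * c)) := by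
  have hr : ‖Real.exp (-c)‖ < 1 := by
    rw [Real.norm_eq_abs, abs_of_pos (Real.exp_pos _)]
    exact Real.exp_lt_one_iff.mpr (by linarith)
  have h0 : Summable (fun m : ℕ => (m : ℝ) ^ 8 * Real.exp (-c) ^ m) :=
    summable_pow_mul_geometric_of_norm_lt_one 8 hr
  have h1 : Summable ((fun m : ℕ => (m : ℝ) ^ 8 * Real.exp (-c) ^ m) ∘ (fun n : ℕ => n + 2)) :=
    h0.comp_injective (add_left_injective 2)
  refine h1.congr fun n => ?_
  simp only [Function.comp]
  rw [← Real.exp_nat_mul]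
  push_cast
  ring_nf

/-- The tail series `F(y) = Σ_{n≥2} (n²-1)((1/6)n⁴y⁴ - 2n²y² + 2) e^{-n²y²/4}` of the
diameter of the Brownian tree is differentiable on `(0,∞)` with derivative
`F'(y) = -(1/12) Σ_{n≥1} (n⁸y⁵ - n⁶y³(20 + y²) + 20n⁴y(3 + y²) - 60n²y) e^{-n²y²/4}`. -/
theorem diameter_tail_hasDerivAt (y : ℝ) (hy : 0 < y) :
    HasDerivAt
      (fun u : ℝ => ∑' n : ℕ,
        (((n : ℝ) + 2) ^ 2 - 1) *
          ((1 / 6) * ((n : ℝ) + 2) ^ 4 * u ^ 4 - 2 * ((n : ℝ) + 2) ^ 2 * u ^ 2 + 2) *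
          Real.exp (-(((n : ℝ) + 2) ^ 2 * u ^ 2 / 4)))
      (-(1 / 12) * ∑' n : ℕ,
        (((n : ℝ) + 1) ^ 8 * y ^ 5 - ((n : ℝ) + 1) ^ 6 * y ^ 3 * (20 + y ^ 2)
          + 20 * ((n : ℝ) + 1) ^ 4 * y * (3 + y ^ 2) - 60 * ((n : ℝ) + 1) ^ 2 * y) *
          Real.exp (-(((n : ℝ) + 1) ^ 2 * y ^ 2 / 4)))
      y := by
  have hyt : y ∈ Set.Ioo (y / 2) (2 * y) := ⟨by linarith, by linarith⟩
  -- the summable bound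
  set Q : ℝ := (2 * y) ^ 5 + (2 * y) ^ 3 * (20 + (2 * y) ^ 2)
      + 20 * (2 * y) * (3 + (2 * y) ^ 2) + 60 * (2 * y) with hQ
  set U : ℕ → ℝ := fun n => (1 / 12) * (((n : ℝ) + 2) ^ 8 * Q) *
      Real.exp (-(((n : ℝ) + 2)) * (y ^ 2 / 16)) with hU
  have hUsum : Summable U := by
    have := (diamAuxSummable (y ^ 2 / 16) (by positivity)).mul_left ((1 / 12) * Q)
    refine this.congr fun n => ?_
    simp only [hU]; ring
  -- the bound on the derivatives
  have hbound : ∀ (n : ℕ), ∀ u ∈ Set.Ioo (y / 2) (2 * y), ‖diamG' n u‖ ≤ U n := by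
    intro n u hu
    obtain ⟨hu1, hu2⟩ := hu
    have hu0 : 0 < u := lt_trans (by linarith) hu1
    have h0n : (0 : ℝ) ≤ (n : ℝ) := Nat.cast_nonneg n
    set m : ℝ := (n : ℝ) + 2 with hm
    have hm1 : (1 : ℝ) ≤ m := by rw [hm]; linarith
    have hm0 : (0 : ℝ) < m := by linarith
    clear_value m
    -- exponential bound
    have hE : Real.exp (-(m ^ 2 * u ^ 2 / 4)) ≤ Real.exp (-m * (y ^ 2 / 16)) := by
      apply Real.exp_le_exp.mpr
      have hsq : (y / 2) ^ 2 ≤ u ^ 2 := pow_le_pow_left₀ (by positivity) hu1.le 2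
      have hmm : (0 : ℝ) ≤ m ^ 2 - m := by nlinarith
      nlinarith [mul_le_mul_of_nonneg_left hsq (sq_nonneg m),
        mul_nonneg hmm (sq_nonneg y)]
    -- polynomial bound
    have ha : (0:ℝ) ≤ m ^ 8 * u ^ 5 := by positivity
    have hb : (0:ℝ) ≤ m ^ 6 * u ^ 3 * (20 + u ^ 2) := by positivity
    have hcc : (0:ℝ) ≤ 20 * m ^ 4 * u * (3 + u ^ 2) := by positivity
    have hd : (0:ℝ) ≤ 60 * m ^ 2 * u := by positivity
    have hPabs : |m ^ 8 * u ^ 5 - m ^ 6 * u ^ 3 * (20 + u ^ 2)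
        + 20 * m ^ 4 * u * (3 + u ^ 2) - 60 * m ^ 2 * u|
        ≤ m ^ 8 * u ^ 5 + m ^ 6 * u ^ 3 * (20 + u ^ 2)
          + 20 * m ^ 4 * u * (3 + u ^ 2) + 60 * m ^ 2 * u := by
      rw [abs_le]
      constructor <;> linarith
    have hm68 : m ^ 6 ≤ m ^ 8 := pow_le_pow_right₀ hm1 (by norm_num)
    have hm48 : m ^ 4 ≤ m ^ 8 := pow_le_pow_right₀ hm1 (by norm_num)
    have hm28 : m ^ 2 ≤ m ^ 8 := pow_le_pow_right₀ hm1 (by norm_num)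
    have hu5 : u ^ 5 ≤ (2 * y) ^ 5 := pow_le_pow_left₀ hu0.le hu2.le 5
    have hu3 : u ^ 3 ≤ (2 * y) ^ 3 := pow_le_pow_left₀ hu0.le hu2.le 3
    have hu2' : u ^ 2 ≤ (2 * y) ^ 2 := pow_le_pow_left₀ hu0.le hu2.le 2
    have hta : m ^ 8 * u ^ 5 ≤ m ^ 8 * (2 * y) ^ 5 :=
      mul_le_mul_of_nonneg_left hu5 (by positivity)
    have htb : m ^ 6 * u ^ 3 * (20 + u ^ 2) ≤ m ^ 8 * ((2 * y) ^ 3 * (20 + (2 * y) ^ 2)) := by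
      rw [mul_assoc]
      apply mul_le_mul hm68 (mul_le_mul hu3 (by linarith) (by positivity) (by positivity))
        (by positivity) (by positivity)
    have htc : 20 * m ^ 4 * u * (3 + u ^ 2) ≤ m ^ 8 * (20 * (2 * y) * (3 + (2 * y) ^ 2)) := by
      have h1 : 20 * m ^ 4 * u * (3 + u ^ 2) = m ^ 4 * (20 * u * (3 + u ^ 2)) := by ring
      rw [h1]
      apply mul_le_mul hm48
      · apply mul_le_mul (by linarith) (by linarith) (by positivity) (by positivity)
      · positivity
      · positivity
    have htd : 60 * m ^ 2 * u ≤ m ^ 8 * (60 * (2 * y)) := by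
      have h1 : 60 * m ^ 2 * u = m ^ 2 * (60 * u) := by ring
      rw [h1]
      apply mul_le_mul hm28 (by linarith) (by positivity) (by positivity)
    have hP : |m ^ 8 * u ^ 5 - m ^ 6 * u ^ 3 * (20 + u ^ 2)
        + 20 * m ^ 4 * u * (3 + u ^ 2) - 60 * m ^ 2 * u| ≤ m ^ 8 * Q := by
      refine hPabs.trans ?_
      have hqq : m ^ 8 * Q = m ^ 8 * (2 * y) ^ 5 + m ^ 8 * ((2 * y) ^ 3 * (20 + (2 * y) ^ 2))
          + m ^ 8 * (20 * (2 * y) * (3 + (2 * y) ^ 2)) + m ^ 8 * (60 * (2 * y)) := by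
        rw [hQ]; ring
      rw [hqq]
      linarith
    calc ‖diamG' n u‖
        = (1 / 12) * |m ^ 8 * u ^ 5 - m ^ 6 * u ^ 3 * (20 + u ^ 2)
            + 20 * m ^ 4 * u * (3 + u ^ 2) - 60 * m ^ 2 * u| *
            Real.exp (-(m ^ 2 * u ^ 2 / 4)) := by
          simp only [diamG', ← hm]
          rw [Real.norm_eq_abs, abs_mul, abs_mul, abs_of_pos (Real.exp_pos _)]
          norm_num
      _ ≤ (1 / 12) * (m ^ 8 * Q) * Real.exp (-m * (y ^ 2 / 16)) := by
          apply mul_le_mul (by apply mul_le_mul_of_nonneg_left hP; norm_num) hE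
            (Real.exp_pos _).le (by positivity)
      _ = U n := by rw [hU, hm]
  -- summability at the point y itself
  have hgsum : Summable (fun n => diamG n y) := by
    have hmaj : Summable (fun n : ℕ => ((1 / 6) * y ^ 4 + 2 * y ^ 2 + 2) * (((n : ℝ) + 2) ^ 8 *
        Real.exp (-(((n : ℝ) + 2)) * (y ^ 2 / 4)))) :=
      ((diamAuxSummable (y ^ 2 / 4) (by positivity)).mul_left _)
    refine Summable.of_norm_bounded hmaj fun n => ?_
    have h0n : (0 : ℝ) ≤ (n : ℝ) := Nat.cast_nonneg n
    set m : ℝ := (n : ℝ) + 2 with hm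
    have hm1 : (1 : ℝ) ≤ m := by rw [hm]; linarith
    have hm0 : (0 : ℝ) < m := by linarith
    clear_value m
    have hE : Real.exp (-(m ^ 2 * y ^ 2 / 4)) ≤ Real.exp (-m * (y ^ 2 / 4)) := by
      apply Real.exp_le_exp.mpr
      have hmm : (0 : ℝ) ≤ m ^ 2 - m := by nlinarith
      nlinarith [mul_nonneg hmm (sq_nonneg y)]
    have hm2 : (0:ℝ) ≤ m ^ 2 - 1 := by nlinarith
    have hpabs : |(1 / 6) * m ^ 4 * y ^ 4 - 2 * m ^ 2 * y ^ 2 + 2|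
        ≤ (1 / 6) * m ^ 4 * y ^ 4 + 2 * m ^ 2 * y ^ 2 + 2 := by
      have h1 : (0:ℝ) ≤ (1 / 6) * m ^ 4 * y ^ 4 := by positivity
      have h2 : (0:ℝ) ≤ 2 * m ^ 2 * y ^ 2 := by positivity
      rw [abs_le]
      constructor <;> linarith
    have hm68 : m ^ 6 ≤ m ^ 8 := pow_le_pow_right₀ hm1 (by norm_num)
    have hm48 : m ^ 4 ≤ m ^ 8 := pow_le_pow_right₀ hm1 (by norm_num)
    have hm28 : m ^ 2 ≤ m ^ 8 := pow_le_pow_right₀ hm1 (by norm_num)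
    have key : (m ^ 2 - 1) * ((1 / 6) * m ^ 4 * y ^ 4 + 2 * m ^ 2 * y ^ 2 + 2)
        ≤ m ^ 8 * ((1 / 6) * y ^ 4 + 2 * y ^ 2 + 2) := by
      have step : (m ^ 2 - 1) * ((1 / 6) * m ^ 4 * y ^ 4 + 2 * m ^ 2 * y ^ 2 + 2)
          ≤ m ^ 2 * ((1 / 6) * m ^ 4 * y ^ 4 + 2 * m ^ 2 * y ^ 2 + 2) :=
        mul_le_mul_of_nonneg_right (by linarith) (by positivity)
      refine step.trans ?_
      nlinarith [mul_nonneg (sub_nonneg.mpr hm68) (pow_nonneg (sq_nonneg y) 2),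
        mul_nonneg (sub_nonneg.mpr hm48) (sq_nonneg y),
        sub_nonneg.mpr hm28, sq_nonneg (y ^ 2)]
    calc ‖diamG n y‖
        = |m ^ 2 - 1| * |(1 / 6) * m ^ 4 * y ^ 4 - 2 * m ^ 2 * y ^ 2 + 2| *
            Real.exp (-(m ^ 2 * y ^ 2 / 4)) := by
          simp only [diamG, ← hm]
          rw [Real.norm_eq_abs, abs_mul, abs_mul, abs_of_pos (Real.exp_pos _)]
      _ ≤ (m ^ 2 - 1) * ((1 / 6) * m ^ 4 * y ^ 4 + 2 * m ^ 2 * y ^ 2 + 2) *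
            Real.exp (-m * (y ^ 2 / 4)) := by
          rw [abs_of_nonneg hm2]
          apply mul_le_mul (mul_le_mul_of_nonneg_left hpabs hm2) hE (Real.exp_pos _).le
          positivity
      _ ≤ m ^ 8 * ((1 / 6) * y ^ 4 + 2 * y ^ 2 + 2) * Real.exp (-m * (y ^ 2 / 4)) :=
          mul_le_mul_of_nonneg_right key (Real.exp_pos _).le
      _ = ((1 / 6) * y ^ 4 + 2 * y ^ 2 + 2) * (m ^ 8 * Real.exp (-m * (y ^ 2 / 4))) := by ring
  -- the derivative of the series
  have H : HasDerivAt (fun z => ∑' n : ℕ, diamG n z) (∑' n : ℕ, diamG' n y) y :=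
    hasDerivAt_tsum_of_isPreconnected hUsum isOpen_Ioo isPreconnected_Ioo
      (fun n x _ => diamG_hasDerivAt n x) hbound hyt hgsum hyt
  -- identify the sums
  set A : ℕ → ℝ := fun n =>
      (((n : ℝ) + 1) ^ 8 * y ^ 5 - ((n : ℝ) + 1) ^ 6 * y ^ 3 * (20 + y ^ 2)
        + 20 * ((n : ℝ) + 1) ^ 4 * y * (3 + y ^ 2) - 60 * ((n : ℝ) + 1) ^ 2 * y) *
        Real.exp (-(((n : ℝ) + 1) ^ 2 * y ^ 2 / 4)) with hA
  have hg'A : ∀ n : ℕ, diamG' n y = -(1 / 12) * A (n + 1) := by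
    intro n
    simp only [hA, diamG']
    push_cast
    ring
  have hg'sum : Summable (fun n => diamG' n y) :=
    Summable.of_norm_bounded hUsum (fun n => hbound n y hyt)
  have hA1 : Summable (fun n => A (n + 1)) := by
    refine ((hg'sum.mul_left (-12)).congr fun n => ?_)
    rw [hg'A n]; ring
  have hAsum : Summable A := (summable_nat_add_iff 1).mp hA1
  have hA0 : A 0 = 0 := by
    have h0 : (((0 : ℕ) : ℝ) + 1) ^ 8 * y ^ 5 - (((0 : ℕ) : ℝ) + 1) ^ 6 * y ^ 3 * (20 + y ^ 2)
        + 20 * (((0 : ℕ) : ℝ) + 1) ^ 4 * y * (3 + y ^ 2) - 60 * (((0 : ℕ) : ℝ) + 1) ^ 2 * y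
        = 0 := by push_cast; ring
    simp only [hA, h0, zero_mul]
  have hEq : (∑' n : ℕ, diamG' n y) = -(1 / 12) * ∑' n : ℕ, A n := by
    rw [Summable.tsum_eq_zero_add hAsum, hA0, zero_add]
    rw [tsum_congr hg'A, tsum_mul_left]
  rw [hEq] at H
  exact H
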